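/- Let K be a finite commutative group whose order is a power of 2, and let sq denote the subgroup of squares of K (the range of the homomorphism x ↦ x^2). Let Φ : (Subgroup K →₀ ZMod 2) →ₗ[ZMod 2] ((K →* ℤˣ) → ZMod 2) be the ZMod 2-linear map determined on basis vectors by Φ(Finsupp.single U 1)(χ) = 1 if U ≤ ker χ, and 0 otherwise. Then the kernel of Φ equals the ZMod 2-span of the set consisting of: (i) the elements Finsupp.single H 1 + Finsupp.single H' 1 for all subgroups H, H' of K with H ⊔ sq = H' ⊔ sq; and (ii) the elements Finsupp.single L 1 + Σ_M Finsupp.single M 1, the sum taken over all subgroups M with L < M < T, for all pairs of subgroups L ≤ T of K with sq ≤ L and Subgroup.relindex L T = 4. -/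

import Mathlib

set_option linter.unusedSectionVars false
set_option maxHeartbeats 1000000

open scoped Classical in
/-- The mod-2 linearization map `A(K)/2 → RO(K;ℝ)/2` (on the free `ZMod 2`-module with
basis the subgroups of `K`): the basis vector at a subgroup `U` is sent to the function
on characters `χ : K →* ℤˣ` which is `1` exactly when `U ≤ ker χ`. -/
noncomputable def linearizationMap (K : Type*) [CommGroup K] :
    (Subgroup K →₀ ZMod 2) →ₗ[ZMod 2] ((K →* ℤˣ) → ZMod 2) :=
  Finsupp.lsum (ZMod 2) fun U : Subgroup K =>
    LinearMap.toSpanSingleton (ZMod 2) ((K →* ℤˣ) → ZMod 2)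
      (fun χ : K →* ℤˣ => if U ≤ χ.ker then (1 : ZMod 2) else 0)

namespace KerLin

variable {K : Type*} [CommGroup K] [Finite K]

/-- the subgroup of squares -/
abbrev sqK (K : Type*) [CommGroup K] : Subgroup K := (powMonoidHom 2 : K →* K).range

/-- `J L x = L ⊔ ⟨x⟩` -/
abbrev J (L : Subgroup K) (x : K) : Subgroup K := L ⊔ Subgroup.zpowers x

lemma sq_mem {L : Subgroup K} (hsq : sqK K ≤ L) (x : K) : x ^ 2 ∈ L :=
  hsq ⟨x, rfl⟩

lemma mem_J {L : Subgroup K} (hsq : sqK K ≤ L) {x y : K} :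
    y ∈ J L x ↔ y ∈ L ∨ x⁻¹ * y ∈ L := by
  constructor
  · intro hmem
    obtain ⟨w, hw, z, hz, rfl⟩ := Subgroup.mem_sup.mp hmem
    obtain ⟨n, hn⟩ := Subgroup.mem_zpowers_iff.mp hz
    subst hn
    have e2 : ∀ k : ℤ, (x ^ 2) ^ k = x ^ (2 * k) := by
      intro k
      rw [← zpow_natCast x 2, ← zpow_mul]
      norm_num
    rcases Int.even_or_odd n with ⟨k, rfl⟩ | ⟨k, rfl⟩
    · left
      have e : x ^ (k + k) = (x ^ 2) ^ k := by rw [e2]; ring_nf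
      rw [e]
      exact Subgroup.mul_mem _ hw (Subgroup.zpow_mem _ (sq_mem hsq x) k)
    · right
      have e : x⁻¹ * (w * x ^ (2 * k + 1)) = w * (x ^ 2) ^ k := by
        rw [e2, ← zpow_neg_one, mul_comm (x ^ (-1 : ℤ)) (w * x ^ (2 * k + 1)),
          mul_assoc, ← zpow_add]
        norm_num
      rw [e]
      exact Subgroup.mul_mem _ hw (Subgroup.zpow_mem _ (sq_mem hsq x) k)
  · rintro (h | h)
    · exact Subgroup.mem_sup_left h
    · have : y = x * (x⁻¹ * y) := by group
      rw [this]
      exact Subgroup.mul_mem _ (Subgroup.mem_sup_right (Subgroup.mem_zpowers x))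
        (Subgroup.mem_sup_left h)

lemma mem_J_self (L : Subgroup K) (x : K) : x ∈ J L x :=
  Subgroup.mem_sup_right (Subgroup.mem_zpowers x)

lemma left_le_J (L : Subgroup K) (x : K) : L ≤ J L x := le_sup_left

lemma J_le {L T : Subgroup K} {x : K} (hL : L ≤ T) (hx : x ∈ T) : J L x ≤ T :=
  sup_le hL ((Subgroup.zpowers_le).mpr hx)

lemma J_eq {L : Subgroup K} (hsq : sqK K ≤ L) {x x' : K} (h : x⁻¹ * x' ∈ L) :
    J L x = J L x' := by
  have key : ∀ u v : K, u⁻¹ * v ∈ L → ∀ y, u⁻¹ * y ∈ L → v⁻¹ * y ∈ L := by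
    intro u v huv y hy
    have : v⁻¹ * y = (u⁻¹ * v)⁻¹ * (u⁻¹ * y) := by group
    rw [this]
    exact Subgroup.mul_mem _ (Subgroup.inv_mem _ huv) hy
  ext y
  rw [mem_J hsq, mem_J hsq]
  constructor
  · rintro (hy | hy)
    · exact Or.inl hy
    · exact Or.inr (key x x' h y hy)
  · rintro (hy | hy)
    · exact Or.inl hy
    · refine Or.inr (key x' x ?_ y hy)
      have : x'⁻¹ * x = (x⁻¹ * x')⁻¹ := by group
      rw [this]; exact Subgroup.inv_mem _ h

lemma mem_JJ {L : Subgroup K} (hsq : sqK K ≤ L) {a b y : K} :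
    y ∈ J (J L a) b ↔ y ∈ L ∨ a⁻¹ * y ∈ L ∨ b⁻¹ * y ∈ L ∨ (a * b)⁻¹ * y ∈ L := by
  have hsq' : sqK K ≤ J L a := le_trans hsq (left_le_J L a)
  rw [mem_J hsq', mem_J hsq, mem_J hsq]
  have e : a⁻¹ * (b⁻¹ * y) = (a * b)⁻¹ * y := by rw [mul_inv, mul_assoc]
  rw [e]
  tauto

lemma coset_symm {L : Subgroup K} {u v : K} (h : u⁻¹ * v ∈ L) : v⁻¹ * u ∈ L := by
  have e : v⁻¹ * u = (u⁻¹ * v)⁻¹ := by rw [mul_inv, inv_inv, mul_comm]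
  rw [e]; exact Subgroup.inv_mem _ h

lemma ab_not_mem {L : Subgroup K} (hsq : sqK K ≤ L) {a b : K} (hab : a⁻¹ * b ∉ L) :
    a * b ∉ L := fun h => hab (by
      have e : a⁻¹ * b = a * b * (a ^ 2)⁻¹ := by
        rw [pow_two, mul_inv, mul_comm a b, mul_assoc b a, mul_inv_cancel_left, mul_comm]
      rw [e]; exact Subgroup.mul_mem _ h (Subgroup.inv_mem _ (sq_mem hsq a)))

lemma relindex_le_of_cover {L T : Subgroup K} {n : ℕ} (c : Fin n → K)
    (hc : ∀ i, c i ∈ T) (hcov : ∀ t ∈ T, ∃ i, (c i)⁻¹ * t ∈ L) :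
    Subgroup.relIndex L T ≤ n := by
  rw [Subgroup.relIndex, Subgroup.index]
  refine le_trans (Nat.card_le_card_of_surjective
    (fun i : Fin n => (QuotientGroup.mk ⟨c i, hc i⟩ : T ⧸ (L.subgroupOf T))) ?_) (by simp)
  intro q
  induction q using QuotientGroup.induction_on with
  | H t =>
    obtain ⟨i, hi⟩ := hcov t t.2
    exact ⟨i, (QuotientGroup.eq).mpr (by simpa [Subgroup.mem_subgroupOf] using hi)⟩

lemma le_relindex_of_distinct {L T : Subgroup K} {n : ℕ} (c : Fin n → K)
    (hc : ∀ i, c i ∈ T) (hd : ∀ i j, (c i)⁻¹ * c j ∈ L → i = j) :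
    n ≤ Subgroup.relIndex L T := by
  rw [Subgroup.relIndex, Subgroup.index]
  refine le_trans (by simp) (Nat.card_le_card_of_injective
    (fun i : Fin n => (QuotientGroup.mk ⟨c i, hc i⟩ : T ⧸ (L.subgroupOf T))) ?_)
  intro i j hij
  exact hd i j (by simpa [Subgroup.mem_subgroupOf] using (QuotientGroup.eq).mp hij)

lemma relindex_JJ {L : Subgroup K} (hsq : sqK K ≤ L) {a b : K}
    (ha : a ∉ L) (hb : b ∉ J L a) :
    Subgroup.relIndex L (J (J L a) b) = 4 := by
  have hbL : b ∉ L := fun h => hb (left_le_J L a h)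
  have hab : a⁻¹ * b ∉ L := fun h => hb ((mem_J hsq).mpr (Or.inr h))
  have habL : a * b ∉ L := ab_not_mem hsq hab
  have haT : a ∈ J (J L a) b := left_le_J _ _ (mem_J_self L a)
  have hbT : b ∈ J (J L a) b := mem_J_self _ b
  set c : Fin 4 → K := fun i => match i with
    | 0 => 1 | 1 => a | 2 => b | 3 => a * b with hcdef
  have hc : ∀ i, c i ∈ J (J L a) b := by
    intro i
    fin_cases i
    · exact Subgroup.one_mem _
    · exact haT
    · exact hbT
    · exact Subgroup.mul_mem _ haT hbT
  have nsymm : ∀ {u v : K}, u⁻¹ * v ∉ L → v⁻¹ * u ∉ L := fun h hh => h (coset_symm hh)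
  have h01 : (1 : K)⁻¹ * a ∉ L := by simpa using ha
  have h02 : (1 : K)⁻¹ * b ∉ L := by simpa using hbL
  have h03 : (1 : K)⁻¹ * (a * b) ∉ L := by simpa using habL
  have h13 : a⁻¹ * (a * b) ∉ L := by rw [inv_mul_cancel_left]; exact hbL
  have h23 : b⁻¹ * (a * b) ∉ L := by rw [mul_comm a b, inv_mul_cancel_left]; exact ha
  apply le_antisymm
  · apply relindex_le_of_cover c hc
    intro t ht
    rcases (mem_JJ hsq).mp ht with h | h | h | h
    · exact ⟨0, by show (1:K)⁻¹ * t ∈ L; simpa using h⟩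
    · exact ⟨1, h⟩
    · exact ⟨2, h⟩
    · exact ⟨3, h⟩
  · apply le_relindex_of_distinct c hc
    intro i j
    fin_cases i <;> fin_cases j <;> intro h <;>
      first
        | rfl
        | exact absurd h h01
        | exact absurd h h02
        | exact absurd h h03
        | exact absurd h hab
        | exact absurd h h13
        | exact absurd h h23
        | exact absurd h (nsymm h01)
        | exact absurd h (nsymm h02)
        | exact absurd h (nsymm h03)
        | exact absurd h (nsymm hab)
        | exact absurd h (nsymm h13)
        | exact absurd h (nsymm h23)

lemma exists_ab {L T : Subgroup K} (hsq : sqK K ≤ L) (hLT : L ≤ T)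
    (h4 : Subgroup.relIndex L T = 4) :
    ∃ a b : K, a ∈ T ∧ a ∉ L ∧ b ∈ T ∧ b ∉ J L a ∧ T = J (J L a) b := by
  have hTL : ¬ T ≤ L := by
    intro h
    rw [Subgroup.relIndex_eq_one.mpr h] at h4
    omega
  obtain ⟨a, haT, haL⟩ := SetLike.not_le_iff_exists.mp hTL
  have hTa : ¬ T ≤ J L a := by
    intro hle
    have h2 : Subgroup.relIndex L T ≤ 2 := by
      apply relindex_le_of_cover (fun i : Fin 2 => match i with | 0 => 1 | 1 => a)
      · intro i; fin_cases i
        · exact Subgroup.one_mem _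
        · exact haT
      · intro t ht
        rcases (mem_J hsq).mp (hle ht) with h | h
        · exact ⟨0, by show (1:K)⁻¹ * t ∈ L; simpa using h⟩
        · exact ⟨1, h⟩
    omega
  obtain ⟨b, hbT, hb⟩ := SetLike.not_le_iff_exists.mp hTa
  refine ⟨a, b, haT, haL, hbT, hb, ?_⟩
  have hsub : J (J L a) b ≤ T := J_le (J_le hLT haT) hbT
  have h4' := relindex_JJ hsq haL hb
  have hmul := Subgroup.relIndex_mul_relIndex L (J (J L a) b) T
    (le_trans (left_le_J _ _) (left_le_J _ _)) hsub
  rw [h4', h4] at hmul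
  exact le_antisymm hsub (Subgroup.relIndex_eq_one.mp (by omega)) |>.symm

lemma classify {L : Subgroup K} (hsq : sqK K ≤ L) {a b : K}
    (haL : a ∉ L) (hb : b ∉ J L a) :
    {M : Subgroup K | L < M ∧ M < J (J L a) b} = {J L a, J L b, J L (a * b)} ∧
    J L a ≠ J L b ∧ J L a ≠ J L (a * b) ∧ J L b ≠ J L (a * b) := by
  set T := J (J L a) b with hT
  have hbL : b ∉ L := fun h => hb (left_le_J L a h)
  have hab : a⁻¹ * b ∉ L := fun h => hb ((mem_J hsq).mpr (Or.inr h))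
  have habL : a * b ∉ L := ab_not_mem hsq hab
  have haT : a ∈ T := left_le_J _ _ (mem_J_self L a)
  have hbT : b ∈ T := mem_J_self _ b
  have habT : a * b ∈ T := Subgroup.mul_mem _ haT hbT
  have hLT : L ≤ T := le_trans (left_le_J _ _) (left_le_J _ _)
  have h4 := relindex_JJ hsq haL hb
  -- non-memberships
  have hanb : a ∉ J L b := by
    rw [mem_J hsq]
    rintro (h | h)
    · exact haL h
    · exact hab (coset_symm h)
  have hanab : a ∉ J L (a * b) := by
    rw [mem_J hsq]
    rintro (h | h)
    · exact haL h
    · refine hbL ((Subgroup.inv_mem_iff _).mp ?_)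
      have e : (a * b)⁻¹ * a = b⁻¹ := by
        rw [mul_inv, mul_comm a⁻¹ b⁻¹, mul_assoc, inv_mul_cancel, mul_one]
      rwa [e] at h
  have hbnab : b ∉ J L (a * b) := by
    rw [mem_J hsq]
    rintro (h | h)
    · exact hbL h
    · refine haL ((Subgroup.inv_mem_iff _).mp ?_)
      have e : (a * b)⁻¹ * b = a⁻¹ := by
        rw [mul_inv, mul_assoc, inv_mul_cancel, mul_one]
      rwa [e] at h
  -- strict inequalities
  have hlt : ∀ x : K, x ∈ T → x ∉ L → (L < J L x ∧ J L x < T) → True := fun _ _ _ _ => trivial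
  refine ⟨?_, ?_, ?_, ?_⟩
  · ext M
    simp only [Set.mem_setOf_eq, Set.mem_insert_iff, Set.mem_singleton_iff]
    constructor
    · rintro ⟨hLM, hMT⟩
      -- relindex L M = 2
      have hmul := Subgroup.relIndex_mul_relIndex L M T hLM.le hMT.le
      rw [h4] at hmul
      have h1 : Subgroup.relIndex L M ≠ 1 := fun h =>
        hLM.not_ge (Subgroup.relIndex_eq_one.mp h)
      have h2 : Subgroup.relIndex M T ≠ 1 := fun h =>
        hMT.not_ge (Subgroup.relIndex_eq_one.mp h)
      have hle4 : Subgroup.relIndex L M ≤ 4 :=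
        Nat.le_of_dvd (by norm_num) ⟨Subgroup.relIndex M T, hmul.symm⟩
      have hm2 : Subgroup.relIndex L M = 2 := by
        interval_cases h : (Subgroup.relIndex L M) <;> omega
      obtain ⟨m₀, hm₀M, hm₀L⟩ := SetLike.exists_of_lt hLM
      have hJm : J L m₀ ≤ M := J_le hLM.le hm₀M
      have hMJ : M ≤ J L m₀ := by
        by_contra hc
        obtain ⟨m₁, hm₁M, hm₁⟩ := SetLike.not_le_iff_exists.mp hc
        have hm₁L : m₁ ∉ L := fun h => hm₁ (left_le_J _ _ h)
        have h3 : (3 : ℕ) ≤ Subgroup.relIndex L M := by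
          apply le_relindex_of_distinct
            (fun i : Fin 3 => match i with | 0 => 1 | 1 => m₀ | 2 => m₁)
          · intro i; fin_cases i
            · exact Subgroup.one_mem _
            · exact hm₀M
            · exact hm₁M
          · intro i j h
            fin_cases i <;> fin_cases j <;>
              first
                | rfl
                | exact absurd (by simpa using h) hm₀L
                | exact absurd (by simpa using h) hm₁L
                | exact absurd (by simpa using coset_symm h) hm₀L
                | exact absurd (by simpa using coset_symm h) hm₁L
                | exact absurd ((mem_J hsq).mpr (Or.inr h)) hm₁
                | exact absurd ((mem_J hsq).mpr (Or.inr (coset_symm h))) hm₁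
        omega
      have hMeq : M = J L m₀ := le_antisymm hMJ hJm
      rcases (mem_JJ hsq).mp (hMT.le hm₀M) with h | h | h | h
      · exact absurd h hm₀L
      · exact Or.inl (hMeq.trans (J_eq hsq h).symm)
      · exact Or.inr (Or.inl (hMeq.trans (J_eq hsq h).symm))
      · exact Or.inr (Or.inr (hMeq.trans (J_eq hsq h).symm))
    · have hbetween : ∀ x : K, x ∈ T → x ∉ L → (∃ w ∈ T, w ∉ J L x) →
          L < J L x ∧ J L x < T := by
        intro x hxT hxL ⟨w, hwT, hw⟩
        constructor
        · exact lt_of_le_of_ne (left_le_J _ _)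
            (fun h => hxL (h ▸ mem_J_self L x))
        · exact lt_of_le_of_ne (J_le hLT hxT)
            (fun h => hw (h ▸ hwT))
      rintro (rfl | rfl | rfl)
      · exact hbetween a haT haL ⟨b, hbT, hb⟩
      · exact hbetween b hbT hbL ⟨a, haT, hanb⟩
      · exact hbetween (a * b) habT habL ⟨a, haT, hanab⟩
  · exact fun h => hb (h ▸ mem_J_self L b)
  · exact fun h => hanab (h ▸ mem_J_self L a)
  · exact fun h => hbnab (h ▸ mem_J_self L b)

open Classical in
lemma Phi_single (U : Subgroup K) :
    linearizationMap K (Finsupp.single U 1) =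
      fun χ : K →* ℤˣ => if U ≤ χ.ker then (1 : ZMod 2) else 0 := by
  simp [linearizationMap]

open Classical in
lemma Phi_apply (f : Subgroup K →₀ ZMod 2) (χ : K →* ℤˣ) :
    linearizationMap K f χ =
      ∑ U ∈ f.support, f U * (if U ≤ χ.ker then (1 : ZMod 2) else 0) := by
  simp [linearizationMap, Finsupp.lsum_apply, Finsupp.sum, LinearMap.toSpanSingleton_apply]

lemma sq_le_ker (χ : K →* ℤˣ) : sqK K ≤ χ.ker := by
  rintro _ ⟨x, rfl⟩
  rw [MonoidHom.mem_ker]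
  show χ (x ^ 2) = 1
  rw [map_pow]
  exact Int.units_sq (χ x)

lemma J_le_ker {L : Subgroup K} (hsq : sqK K ≤ L) {χ : K →* ℤˣ}
    (hL : L ≤ χ.ker) (x : K) : (J L x ≤ χ.ker) ↔ χ x = 1 := by
  constructor
  · intro h
    exact MonoidHom.mem_ker.mp (h (mem_J_self L x))
  · intro h y hy
    rcases (mem_J hsq).mp hy with h' | h'
    · exact hL h'
    · rw [MonoidHom.mem_ker]
      have e : y = x * (x⁻¹ * y) := (mul_inv_cancel_left x y).symm
      rw [e, map_mul, MonoidHom.mem_ker.mp (hL h'), h, one_mul]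

open Classical in
noncomputable def chiOf (W : Subgroup K) (h2 : W.index = 2) : K →* ℤˣ where
  toFun x := if x ∈ W then 1 else -1
  map_one' := if_pos (Subgroup.one_mem W)
  map_mul' x y := by
    by_cases hx : x ∈ W <;> by_cases hy : y ∈ W <;>
      simp [hx, hy, Subgroup.mul_mem_iff_of_index_two h2]

open Classical in
lemma ker_chiOf (W : Subgroup K) (h2 : W.index = 2) : (chiOf W h2).ker = W := by
  ext x
  rw [MonoidHom.mem_ker]
  by_cases hx : x ∈ W <;> simp [chiOf, hx]

lemma addself (v : Subgroup K →₀ ZMod 2) : v + v = 0 := by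
  rw [← two_smul (ZMod 2) v, show (2 : ZMod 2) = 0 by decide, zero_smul]

open Classical in
lemma finsum_three {A B C : Subgroup K} (hAB : A ≠ B) (hAC : A ≠ C) (hBC : B ≠ C)
    (P : Subgroup K → Prop) (hP : {M | P M} = {A, B, C}) :
    (∑ᶠ (M : Subgroup K) (_ : P M), Finsupp.single M (1 : ZMod 2)) =
      Finsupp.single A 1 + Finsupp.single B 1 + Finsupp.single C 1 := by
  have h1 : (∑ᶠ (M : Subgroup K) (_ : P M), Finsupp.single M (1 : ZMod 2)) =
      ∑ᶠ M ∈ ({A, B, C} : Set (Subgroup K)), Finsupp.single M (1 : ZMod 2) := by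
    rw [← hP]; rfl
  rw [h1,
    show ({A, B, C} : Set (Subgroup K)) = (↑({A, B, C} : Finset (Subgroup K)) : Set _) by
      simp,
    finsum_mem_coe_finset,
    Finset.sum_insert (by simp [hAB, hAC]),
    Finset.sum_insert (by simp [hBC]),
    Finset.sum_singleton, add_assoc]

open Classical in
lemma D_mem_ker {H H' : Subgroup K} (h : H ⊔ sqK K = H' ⊔ sqK K) :
    Finsupp.single H (1 : ZMod 2) + Finsupp.single H' 1 ∈
      LinearMap.ker (linearizationMap K) := by
  rw [LinearMap.mem_ker, map_add, Phi_single, Phi_single]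
  funext χ
  have key : ∀ U : Subgroup K, U ≤ χ.ker ↔ U ⊔ sqK K ≤ χ.ker := fun U =>
    ⟨fun hu => sup_le hu (sq_le_ker χ), fun hu => le_trans le_sup_left hu⟩
  have hiff : H ≤ χ.ker ↔ H' ≤ χ.ker := by rw [key, key H', h]
  show (if H ≤ χ.ker then (1 : ZMod 2) else 0) + (if H' ≤ χ.ker then 1 else 0) = 0
  by_cases hH : H ≤ χ.ker
  · rw [if_pos hH, if_pos (hiff.mp hH)]; decide
  · rw [if_neg hH, if_neg (fun h' => hH (hiff.mpr h'))]; decide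

open Classical in
lemma B_mem_ker {L T : Subgroup K} (hsq : sqK K ≤ L) (hLT : L ≤ T)
    (h4 : Subgroup.relIndex L T = 4) :
    (Finsupp.single L (1 : ZMod 2) +
        ∑ᶠ (M : Subgroup K) (_ : L < M ∧ M < T), Finsupp.single M 1) ∈
      LinearMap.ker (linearizationMap K) := by
  obtain ⟨a, b, haT, haL, hbT, hb, rfl⟩ := exists_ab hsq hLT h4
  obtain ⟨hset, hAB, hAC, hBC⟩ := classify hsq haL hb
  rw [finsum_three hAB hAC hBC _ hset]
  rw [LinearMap.mem_ker, map_add, map_add, map_add, Phi_single, Phi_single,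
    Phi_single, Phi_single]
  funext χ
  show (if L ≤ χ.ker then (1 : ZMod 2) else 0) +
      ((if J L a ≤ χ.ker then (1 : ZMod 2) else 0) +
        (if J L b ≤ χ.ker then (1 : ZMod 2) else 0) +
        (if J L (a * b) ≤ χ.ker then (1 : ZMod 2) else 0)) = 0
  by_cases hL : L ≤ χ.ker
  · rw [if_pos hL]
    simp only [J_le_ker hsq hL, map_mul]
    rcases Int.units_eq_one_or (χ a) with ha1 | ha1 <;>
      rcases Int.units_eq_one_or (χ b) with hb1 | hb1 <;>
      rw [ha1, hb1] <;> norm_num <;> decide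
  · have hnot : ∀ x : K, ¬ (J L x ≤ χ.ker) := fun x h => hL (le_trans (left_le_J L x) h)
    rw [if_neg hL, if_neg (hnot a), if_neg (hnot b), if_neg (hnot (a * b))]
    decide

open Classical in
lemma main_aux (SP : Submodule (ZMod 2) (Subgroup K →₀ ZMod 2))
    (hD : ∀ H H' : Subgroup K, H ⊔ sqK K = H' ⊔ sqK K →
      Finsupp.single H (1 : ZMod 2) + Finsupp.single H' 1 ∈ SP)
    (hB : ∀ L T : Subgroup K, L ≤ T → sqK K ≤ L → Subgroup.relIndex L T = 4 →
      (Finsupp.single L (1 : ZMod 2) +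
        ∑ᶠ (M : Subgroup K) (_ : L < M ∧ M < T), Finsupp.single M 1) ∈ SP)
    (hSP : SP ≤ LinearMap.ker (linearizationMap K)) :
    LinearMap.ker (linearizationMap K) ≤ SP := by
  intro x hx
  set F : Set (Subgroup K) := {W : Subgroup K | W.index ≤ 2} with hF
  set sup : Submodule (ZMod 2) (Subgroup K →₀ ZMod 2) :=
    Finsupp.supported (ZMod 2) (ZMod 2) F ⊔ SP with hsup
  have key : ∀ n : ℕ, ∀ W : Subgroup K, W.index ≤ n → sqK K ≤ W →
      Finsupp.single W (1 : ZMod 2) ∈ sup := by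
    intro n
    induction n with
    | zero =>
      intro W hW _
      exact absurd (Nat.le_zero.mp hW) Subgroup.index_ne_zero_of_finite
    | succ n ih =>
      intro W hWn hsqW
      by_cases h2 : W.index ≤ 2
      · apply Submodule.mem_sup_left
        rw [Finsupp.mem_supported, Finsupp.support_single_ne_zero W one_ne_zero]
        intro u hu
        rw [Finset.coe_singleton, Set.mem_singleton_iff] at hu
        subst hu
        exact h2
      · push_neg at h2
        have hW_ne_top : W ≠ ⊤ := by
          intro h
          rw [h, Subgroup.index_top] at h2
          omega
        obtain ⟨a, haW⟩ : ∃ a, a ∉ W := by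
          by_contra h
          push_neg at h
          exact hW_ne_top ((Subgroup.eq_top_iff' W).mpr h)
        obtain ⟨b, hb⟩ : ∃ b, b ∉ J W a := by
          by_contra h
          push_neg at h
          have hcov : Subgroup.relIndex W ⊤ ≤ 2 := by
            apply relindex_le_of_cover (fun i : Fin 2 => match i with | 0 => 1 | 1 => a)
            · intro i; exact Subgroup.mem_top _
            · intro t _
              rcases (mem_J hsqW).mp (h t) with h' | h'
              · exact ⟨0, by show (1 : K)⁻¹ * t ∈ W; simpa using h'⟩
              · exact ⟨1, h'⟩
          rw [Subgroup.relIndex_top_right] at hcov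
          omega
        have h4 := relindex_JJ hsqW haW hb
        obtain ⟨hset, hAB, hAC, hBC⟩ := classify hsqW haW hb
        have hWT : W ≤ J (J W a) b := le_trans (left_le_J _ _) (left_le_J _ _)
        have hgenB := hB W (J (J W a) b) hWT hsqW h4
        have hsum := finsum_three hAB hAC hBC _ hset
        have hbetween : ∀ M : Subgroup K,
            M ∈ ({J W a, J W b, J W (a * b)} : Set (Subgroup K)) →
            W < M ∧ M < J (J W a) b := by
          intro M hM
          rw [← hset] at hM
          exact hM
        have hidx : ∀ M : Subgroup K, W < M → M.index ≤ n := by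
          intro M h1
          have hmul := Subgroup.relIndex_mul_index h1.le
          have hr1 : Subgroup.relIndex W M ≠ 1 := fun h =>
            h1.not_ge (Subgroup.relIndex_eq_one.mp h)
          have hM0 : M.index ≠ 0 := Subgroup.index_ne_zero_of_finite
          have hW0 : W.index ≠ 0 := Subgroup.index_ne_zero_of_finite
          have hr0 : Subgroup.relIndex W M ≠ 0 := by
            intro h
            rw [h, zero_mul] at hmul
            exact hW0 hmul.symm
          have h2r : 2 ≤ Subgroup.relIndex W M := by omega
          have hmm : 2 * M.index ≤ Subgroup.relIndex W M * M.index :=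
            Nat.mul_le_mul_right _ h2r
          omega
        have hin : ∀ M : Subgroup K,
            M ∈ ({J W a, J W b, J W (a * b)} : Set (Subgroup K)) →
            Finsupp.single M (1 : ZMod 2) ∈ sup := by
          intro M hM
          obtain ⟨h1, _⟩ := hbetween M hM
          exact ih M (hidx M h1) (le_trans hsqW h1.le)
        have hA := hin (J W a) (by simp)
        have hBB := hin (J W b) (by simp)
        have hC := hin (J W (a * b)) (by simp)
        have heq : Finsupp.single W (1 : ZMod 2) =
            (Finsupp.single W (1 : ZMod 2) +
              ∑ᶠ (M : Subgroup K) (_ : W < M ∧ M < J (J W a) b), Finsupp.single M 1) +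
            (Finsupp.single (J W a) 1 + Finsupp.single (J W b) 1 +
              Finsupp.single (J W (a * b)) 1) := by
          rw [hsum, add_assoc, addself, add_zero]
        rw [heq]
        exact add_mem (Submodule.mem_sup_right hgenB) (add_mem (add_mem hA hBB) hC)
  have hsingle : ∀ H : Subgroup K, Finsupp.single H (1 : ZMod 2) ∈ sup := by
    intro H
    have hDmem : Finsupp.single H (1 : ZMod 2) + Finsupp.single (H ⊔ sqK K) 1 ∈ SP :=
      hD H (H ⊔ sqK K) (by rw [sup_assoc, sup_idem])
    have h1 : Finsupp.single (H ⊔ sqK K) (1 : ZMod 2) ∈ sup :=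
      key _ (H ⊔ sqK K) le_rfl le_sup_right
    have heq : Finsupp.single H (1 : ZMod 2) =
        (Finsupp.single H 1 + Finsupp.single (H ⊔ sqK K) 1) +
          Finsupp.single (H ⊔ sqK K) 1 := by
      rw [add_assoc, addself, add_zero]
    rw [heq]
    exact add_mem (Submodule.mem_sup_right hDmem) h1
  have hx_sup : x ∈ sup := by
    rw [← Finsupp.sum_single x, Finsupp.sum]
    apply Submodule.sum_mem
    intro U _
    have e : Finsupp.single U (x U) = (x U) • Finsupp.single U (1 : ZMod 2) := by
      rw [Finsupp.smul_single', mul_one]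
    rw [e]
    exact Submodule.smul_mem _ _ (hsingle U)
  rw [hsup, Submodule.mem_sup] at hx_sup
  obtain ⟨f, hf, s, hs, hfs⟩ := hx_sup
  have hΦs : linearizationMap K s = 0 := by
    have := hSP hs
    rwa [LinearMap.mem_ker] at this
  have hΦx : linearizationMap K x = 0 := by
    rwa [LinearMap.mem_ker] at hx
  have hΦf : linearizationMap K f = 0 := by
    have e : f = x - s := eq_sub_of_add_eq hfs
    rw [e, map_sub, hΦx, hΦs, sub_zero]
  rw [Finsupp.mem_supported] at hf
  have hind2 : ∀ W : Subgroup K, W.index = 2 → f W = 0 := by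
    intro W h2
    have hev := congrFun hΦf (chiOf W h2)
    rw [Phi_apply, ker_chiOf, Pi.zero_apply] at hev
    rw [Finset.sum_eq_single W] at hev
    · rwa [if_pos le_rfl, mul_one] at hev
    · intro U hU hUW
      rw [if_neg, mul_zero]
      intro hle
      have hUF : U.index ≤ 2 := hf hU
      have hmul := Subgroup.relIndex_mul_index hle
      rw [h2] at hmul
      have hr0 : Subgroup.relIndex U W ≠ 0 := by
        intro h
        rw [h, zero_mul] at hmul
        exact Subgroup.index_ne_zero_of_finite hmul.symm
      have hr1 : Subgroup.relIndex U W = 1 := by omega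
      exact hUW (le_antisymm hle (Subgroup.relIndex_eq_one.mp hr1))
    · intro hW
      rw [Finsupp.notMem_support_iff.mp hW, zero_mul]
  have htop : f ⊤ = 0 := by
    have hev := congrFun hΦf 1
    have hker1 : MonoidHom.ker (1 : K →* ℤˣ) = ⊤ := by
      ext y; simp [MonoidHom.mem_ker]
    rw [Phi_apply, Pi.zero_apply] at hev
    simp only [hker1] at hev
    rw [Finset.sum_eq_single ⊤] at hev
    · rwa [if_pos le_top, mul_one] at hev
    · intro U hU hUne
      exfalso
      have hUF : U.index ≤ 2 := hf hU
      have hU0 : U.index ≠ 0 := Subgroup.index_ne_zero_of_finite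
      have : U.index = 1 ∨ U.index = 2 := by omega
      rcases this with h1 | h1
      · exact hUne (Subgroup.index_eq_one.mp h1)
      · exact Finsupp.mem_support_iff.mp hU (hind2 U h1)
    · intro hW
      rw [Finsupp.notMem_support_iff.mp hW, zero_mul]
  have hf0 : f = 0 := by
    ext W
    rw [Finsupp.coe_zero, Pi.zero_apply]
    by_cases hWF : W ∈ F
    · have hWi : W.index ≤ 2 := hWF
      have hW0 : W.index ≠ 0 := Subgroup.index_ne_zero_of_finite
      have : W.index = 1 ∨ W.index = 2 := by omega
      rcases this with h1 | h1
      · rw [Subgroup.index_eq_one.mp h1]; exact htop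
      · exact hind2 W h1
    · by_contra hne
      exact hWF (hf (Finsupp.mem_support_iff.mpr hne))
  rw [← hfs, hf0, zero_add]
  exact hs

end KerLin

/-- For a finite abelian `2`-group `K`, the kernel of the mod-2 linearization map is
spanned by the relations `D_{H,H'} = [K/H] + [K/H']` for `H + 2K = H' + 2K`, and
`B_{T,L} = [K/L] + Σ_{L < M < T} [K/M]` for `2K ≤ L ≤ T` with `[T : L] = 4`. -/
theorem ker_linearizationMap_eq_span_relations
    (K : Type*) [CommGroup K] [Finite K] (hK : ∃ m : ℕ, Nat.card K = 2 ^ m) :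
    LinearMap.ker (linearizationMap K) =
      Submodule.span (ZMod 2)
        ({x : Subgroup K →₀ ZMod 2 | ∃ H H' : Subgroup K,
            H ⊔ (powMonoidHom 2 : K →* K).range = H' ⊔ (powMonoidHom 2 : K →* K).range ∧
            x = Finsupp.single H 1 + Finsupp.single H' 1} ∪
         {x : Subgroup K →₀ ZMod 2 | ∃ L T : Subgroup K,
            L ≤ T ∧ (powMonoidHom 2 : K →* K).range ≤ L ∧
            Subgroup.relIndex L T = 4 ∧
            x = Finsupp.single L 1 +
              ∑ᶠ (M : Subgroup K) (_ : L < M ∧ M < T), Finsupp.single M 1}) := by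
  classical
  refine le_antisymm (KerLin.main_aux _ ?_ ?_ (Submodule.span_le.mpr ?_))
    (Submodule.span_le.mpr ?_)
  · intro H H' h
    exact Submodule.subset_span (Or.inl ⟨H, H', h, rfl⟩)
  · intro L T h1 h2 h3
    exact Submodule.subset_span (Or.inr ⟨L, T, h1, h2, h3, rfl⟩)
  · rintro y (⟨H, H', hHH, rfl⟩ | ⟨L, T, hLT, hsqL, h4, rfl⟩)
    · exact KerLin.D_mem_ker hHH
    · exact KerLin.B_mem_ker hsqL hLT h4
  · rintro y (⟨H, H', hHH, rfl⟩ | ⟨L, T, hLT, hsqL, h4, rfl⟩)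
    · exact KerLin.D_mem_ker hHH
    · exact KerLin.B_mem_ker hsqL hLT h4
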